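/- Let G be a graph on n vertices with signed adjacency matrix A, let c > 0, and set B = Id_n + (c/√n)·A. Suppose B is positive semidefinite and C is a matrix with CᵀC = B. If G contains a k-vertex subgraph with at least (1/2+ε)·k(k−1)/2 edges and δ < 2cε(k−1)/√n, then C does not satisfy the RIP of order k with parameter δ. -/

import Mathlib

open Finset Matrix

/-- `x` is `k`-sparse: it has at most `k` nonzero coordinates. -/
def Sparse {N : Type*} [Fintype N] (k : ℕ) (x : N → ℝ) : Prop :=
  ∃ S : Finset N, S.card ≤ k ∧ ∀ i ∉ S, x i = 0

/-- `Φ` satisfies the restricted isometry property of order `k` with parameter `δ`. -/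
def RIP {n N : Type*} [Fintype n] [Fintype N] (Φ : Matrix n N ℝ) (k : ℕ) (δ : ℝ) : Prop :=
  ∀ x : N → ℝ, Sparse k x →
    (1 - δ) * ∑ i, (x i) ^ 2 ≤ ∑ j, (Φ.mulVec x j) ^ 2 ∧
    ∑ j, (Φ.mulVec x j) ^ 2 ≤ (1 + δ) * ∑ i, (x i) ^ 2

open scoped Classical in
/-- The signed adjacency matrix of a graph. -/
noncomputable def signedAdj {n : ℕ} (G : SimpleGraph (Fin n)) : Matrix (Fin n) (Fin n) ℝ :=
  fun i j => if i = j then 0 else if G.Adj i j then 1 else -1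

open scoped Classical in
/-- If `G` has a `k`-subgraph with excess `ε` and `δ < 2cε(k-1)/√n`, then a matrix `C`
with `CᵀC = Id + (c/√n)A` does not satisfy the RIP of order `k` with parameter `δ`. -/
theorem stmt12 (n m k : ℕ) (c ε δ : ℝ) (G : SimpleGraph (Fin n))
    (hc : 0 < c) (hk : 1 ≤ k)
    (C : Matrix (Fin m) (Fin n) ℝ)
    (hC : Cᵀ * C = (1 : Matrix (Fin n) (Fin n) ℝ) + (c / Real.sqrt n) • signedAdj G)
    (S : Finset (Fin n)) (hS : S.card = k)
    (hdense : ((1 : ℝ) / 2 + ε) * ((k : ℝ) * ((k : ℝ) - 1)) ≤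
      ((S.offDiag.filter (fun p => G.Adj p.1 p.2)).card : ℝ))
    (hδ : δ < 2 * c * ε * ((k : ℝ) - 1) / Real.sqrt n) :
    ¬ RIP C k δ := by
  classical
  intro hRIP
  have hkR : (1:ℝ) ≤ (k:ℝ) := by exact_mod_cast hk
  have hk0 : (0:ℝ) < (k:ℝ) := by linarith
  have hSne : S.Nonempty := Finset.card_pos.mp (by omega)
  have hn : 0 < n := hSne.choose.pos
  have hsqn : 0 < Real.sqrt n := Real.sqrt_pos.mpr (by exact_mod_cast hn)
  set A := signedAdj G with hA
  set q : ℝ := (Real.sqrt k)⁻¹ with hq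
  have hq2 : q ^ 2 = ((k:ℝ))⁻¹ := by
    rw [hq, ← Real.sqrt_inv, Real.sq_sqrt (by positivity)]
  set x : Fin n → ℝ := fun i => if i ∈ S then q else 0 with hx
  have hsparse : Sparse k x := ⟨S, le_of_eq hS, fun i hi => by simp [hx, hi]⟩
  have hsum1 : ∑ i, (x i) ^ 2 = 1 := by
    have : ∑ i, (x i) ^ 2 = ∑ i ∈ S, q ^ 2 := by
      rw [← Finset.sum_subset (Finset.subset_univ S)
        (fun i _ hi => by simp [hx, hi])]
      exact Finset.sum_congr rfl fun i hi => by simp [hx, hi]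
    rw [this, Finset.sum_const, hS, nsmul_eq_mul, hq2]
    field_simp
  -- quadratic form identity
  have hquad : ∑ j, (C.mulVec x j) ^ 2 = x ⬝ᵥ ((Cᵀ * C) *ᵥ x) := by
    rw [← Matrix.mulVec_mulVec, Matrix.dotProduct_mulVec, Matrix.vecMul_transpose]
    simp [dotProduct, sq, mul_comm]
  -- compute x ⬝ᵥ A *ᵥ x
  set F : ℝ := ((S.offDiag.filter (fun p => G.Adj p.1 p.2)).card : ℝ) with hF
  have hoffcard : ((S.offDiag.card : ℝ)) = (k:ℝ) * ((k:ℝ) - 1) := by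
    rw [Finset.offDiag_card, hS]
    have h1 : k ≤ k * k := Nat.le_mul_of_pos_left k (by omega)
    push_cast [Nat.cast_sub h1]
    ring
  have hsplitcard : ((S.offDiag.filter (fun p => ¬ G.Adj p.1 p.2)).card : ℝ)
      = (k:ℝ) * ((k:ℝ) - 1) - F := by
    have := Finset.card_filter_add_card_filter_not
      (s := S.offDiag) (p := fun p => G.Adj p.1 p.2)
    have h2 : (((S.offDiag.filter (fun p => G.Adj p.1 p.2)).card : ℝ))
        + ((S.offDiag.filter (fun p => ¬ G.Adj p.1 p.2)).card : ℝ)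
        = ((S.offDiag.card : ℝ)) := by exact_mod_cast this
    rw [hoffcard] at h2
    linarith [h2]
  have hsumA : ∑ p ∈ S.offDiag, A p.1 p.2 = 2 * F - (k:ℝ) * ((k:ℝ) - 1) := by
    rw [← Finset.sum_filter_add_sum_filter_not S.offDiag (fun p => G.Adj p.1 p.2)]
    have e1 : ∑ p ∈ S.offDiag.filter (fun p => G.Adj p.1 p.2), A p.1 p.2 = F := by
      rw [Finset.sum_congr rfl (fun p hp => ?_), Finset.sum_const, nsmul_eq_mul, mul_one, hF]
      simp only [Finset.mem_filter, Finset.mem_offDiag] at hp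
      simp [hA, signedAdj, hp.1.2.2, hp.2]
    have e2 : ∑ p ∈ S.offDiag.filter (fun p => ¬ G.Adj p.1 p.2), A p.1 p.2
        = -((k:ℝ) * ((k:ℝ) - 1) - F) := by
      have hterm : ∀ p ∈ S.offDiag.filter (fun p => ¬ G.Adj p.1 p.2),
          A p.1 p.2 = -1 := by
        intro p hp
        simp only [Finset.mem_filter, Finset.mem_offDiag] at hp
        simp [hA, signedAdj, hp.1.2.2, hp.2]
      rw [Finset.sum_congr rfl hterm, Finset.sum_const, nsmul_eq_mul, hsplitcard]
      ring
    rw [e1, e2]; ring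
  have hdiag : ∑ p ∈ (S ×ˢ S).filter (fun p => ¬ p.1 ≠ p.2), A p.1 p.2 = 0 := by
    refine Finset.sum_eq_zero fun p hp => ?_
    simp only [Finset.mem_filter, not_not] at hp
    simp [hA, signedAdj, hp.2]
  have hoffeq : (S ×ˢ S).filter (fun p => p.1 ≠ p.2) = S.offDiag := by
    ext p; simp [Finset.mem_offDiag, and_assoc]
  have hAx : x ⬝ᵥ (A *ᵥ x) = q ^ 2 * (2 * F - (k:ℝ) * ((k:ℝ) - 1)) := by
    have step1 : x ⬝ᵥ (A *ᵥ x) = ∑ i, ∑ j, x i * (A i j * x j) := by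
      simp [dotProduct, Matrix.mulVec, Finset.mul_sum]
    have step2 : ∑ i, ∑ j, x i * (A i j * x j) = ∑ i ∈ S, ∑ j ∈ S, q * (A i j * q) := by
      rw [← Finset.sum_subset (Finset.subset_univ S) (fun i _ hi => by simp [hx, hi])]
      refine Finset.sum_congr rfl fun i hi => ?_
      rw [← Finset.sum_subset (Finset.subset_univ S) (fun j _ hj => by simp [hx, hj])]
      exact Finset.sum_congr rfl fun j hj => by simp [hx, hi, hj]
    have step3 : ∑ i ∈ S, ∑ j ∈ S, q * (A i j * q) = q ^ 2 * ∑ p ∈ S ×ˢ S, A p.1 p.2 := by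
      rw [Finset.sum_product, Finset.mul_sum]
      refine Finset.sum_congr rfl fun i _ => ?_
      rw [Finset.mul_sum]
      exact Finset.sum_congr rfl fun j _ => by ring
    have step4 : ∑ p ∈ S ×ˢ S, A p.1 p.2 = 2 * F - (k:ℝ) * ((k:ℝ) - 1) := by
      rw [← Finset.sum_filter_add_sum_filter_not (S ×ˢ S) (fun p => p.1 ≠ p.2),
        hoffeq, hsumA, hdiag, add_zero]
    rw [step1, step2, step3, step4]
  -- evaluate the quadratic form
  have hxx : x ⬝ᵥ x = 1 := by
    rw [← hsum1]; simp [dotProduct, sq]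
  have htotal : ∑ j, (C.mulVec x j) ^ 2
      = 1 + (c / Real.sqrt n) * (q ^ 2 * (2 * F - (k:ℝ) * ((k:ℝ) - 1))) := by
    rw [hquad, hC, Matrix.add_mulVec, Matrix.one_mulVec, Matrix.smul_mulVec,
      dotProduct_add, dotProduct_smul, hxx, smul_eq_mul, hAx]
  -- the lower bound
  have hexcess : 2 * ε * (k:ℝ) * ((k:ℝ) - 1) ≤ 2 * F - (k:ℝ) * ((k:ℝ) - 1) := by
    rw [hF]; nlinarith [hdense]
  have hpos : (0:ℝ) < c / Real.sqrt n * ((k:ℝ))⁻¹ := by positivity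
  have hlow : 2 * c * ε * ((k:ℝ) - 1) / Real.sqrt n
      ≤ (c / Real.sqrt n) * (q ^ 2 * (2 * F - (k:ℝ) * ((k:ℝ) - 1))) := by
    rw [hq2]
    have h1 : (c / Real.sqrt n * ((k:ℝ))⁻¹) * (2 * ε * (k:ℝ) * ((k:ℝ) - 1))
        ≤ (c / Real.sqrt n * ((k:ℝ))⁻¹) * (2 * F - (k:ℝ) * ((k:ℝ) - 1)) :=
      mul_le_mul_of_nonneg_left hexcess (le_of_lt hpos)
    have h2 : (c / Real.sqrt n * ((k:ℝ))⁻¹) * (2 * ε * (k:ℝ) * ((k:ℝ) - 1))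
        = 2 * c * ε * ((k:ℝ) - 1) / Real.sqrt n := by
      field_simp
    calc 2 * c * ε * ((k:ℝ) - 1) / Real.sqrt n
        = (c / Real.sqrt n * ((k:ℝ))⁻¹) * (2 * ε * (k:ℝ) * ((k:ℝ) - 1)) := h2.symm
      _ ≤ (c / Real.sqrt n * ((k:ℝ))⁻¹) * (2 * F - (k:ℝ) * ((k:ℝ) - 1)) := h1
      _ = (c / Real.sqrt n) * (((k:ℝ))⁻¹ * (2 * F - (k:ℝ) * ((k:ℝ) - 1))) := by ring
  have hub := (hRIP x hsparse).2
  rw [hsum1, mul_one] at hub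
  rw [htotal] at hub
  linarith
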